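/- Let l : ℝ^d → ℝ be twice continuously differentiable with ‖∇²l(w)‖ ≤ L for all w (equivalently, ∇l is L-Lipschitz), let α ≥ 0 and N ≥ 1. For w ∈ ℝ^d let w̃_0 = w and w̃_{j+1} = w̃_j − α∇l(w̃_j) be the gradient-descent path, and define the meta-gradient ∇L(w) := (I − α∇²l(w̃_0))(I − α∇²l(w̃_1))⋯(I − α∇²l(w̃_{N−1}))∇l(w̃_N) (matrix product with the j = 0 factor leftmost). Then ‖∇l(w) − ∇L(w)‖ ≤ ((1 + αL)^{2N} − 1)·‖∇l(w)‖. -/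

import Mathlib

noncomputable section

private lemma aux_prod_near_one {E : Type*} [NormedAddCommGroup E] [NormedSpace ℝ E]
    (c : ℝ) (hc : 0 ≤ c) :
    ∀ (l : List (E →L[ℝ] E)), (∀ T ∈ l, ‖1 - T‖ ≤ c) →
      ‖1 - l.prod‖ ≤ (1 + c) ^ l.length - 1 := by
  intro l
  induction l with
  | nil => simp
  | cons T ls ih =>
    intro h
    have hP : ‖1 - ls.prod‖ ≤ (1 + c) ^ ls.length - 1 :=
      ih (fun S hS => h S (List.mem_cons_of_mem _ hS))
    have hT : ‖(1:E →L[ℝ] E) - T‖ ≤ c := h T List.mem_cons_self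
    have hone : ‖(1 : E →L[ℝ] E)‖ ≤ 1 := ContinuousLinearMap.norm_id_le
    have hPn : ‖ls.prod‖ ≤ (1 + c) ^ ls.length := by
      have : ‖ls.prod‖ ≤ ‖(1:E →L[ℝ] E)‖ + ‖1 - ls.prod‖ := by
        have := norm_sub_le (1 : E →L[ℝ] E) (1 - ls.prod)
        simpa using this
      linarith
    have key : (1 : E →L[ℝ] E) - (T :: ls).prod
        = ((1 - T) * ls.prod) + (1 - ls.prod) := by
      rw [List.prod_cons, sub_mul, one_mul]; abel
    rw [key]
    have h1 : ‖((1 - T) * ls.prod) + ((1:E →L[ℝ] E) - ls.prod)‖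
        ≤ ‖(1:E →L[ℝ] E) - T‖ * ‖ls.prod‖ + ‖(1:E →L[ℝ] E) - ls.prod‖ :=
      (norm_add_le _ _).trans (by gcongr; exact norm_mul_le _ _)
    have hpow : (0:ℝ) ≤ (1 + c) ^ ls.length := by positivity
    have h2 : ‖(1:E →L[ℝ] E) - T‖ * ‖ls.prod‖ ≤ c * (1 + c) ^ ls.length :=
      mul_le_mul hT hPn (norm_nonneg _) hc
    simp only [List.length_cons]
    calc _ ≤ ‖(1:E →L[ℝ] E) - T‖ * ‖ls.prod‖ + ‖(1:E →L[ℝ] E) - ls.prod‖ := h1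
      _ ≤ c * (1 + c) ^ ls.length + ((1 + c) ^ ls.length - 1) := by linarith
      _ = (1 + c) ^ (ls.length + 1) - 1 := by ring

private lemma grad_differentiable (d : ℕ) (l : EuclideanSpace ℝ (Fin d) → ℝ)
    (hl : ContDiff ℝ 2 l) : Differentiable ℝ (gradient l) := by
  have h1 : ContDiff ℝ 1 (fderiv ℝ l) := hl.fderiv_right (by norm_num)
  have h2 := (InnerProductSpace.toDual ℝ (EuclideanSpace ℝ (Fin d))).symm.differentiable
  exact fun x => (h2.differentiableAt).comp x (h1.differentiable one_ne_zero x)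

/-- Lemma D.4: distance between the task gradient and the MAML
meta-gradient.  `∇²l` is realized as `fderiv ℝ (gradient l)` and the product of the
matrices `I − α∇²l(w̃ⱼ)` is ordered with the `j = 0` factor leftmost. -/
theorem maml_meta_gradient_vs_gradient (d : ℕ)
    (l : EuclideanSpace ℝ (Fin d) → ℝ) (L α : ℝ) (N : ℕ)
    (hl : ContDiff ℝ 2 l)
    (hL : ∀ w, ‖fderiv ℝ (gradient l) w‖ ≤ L)
    (hα : 0 ≤ α) (hN : 1 ≤ N)
    (w : EuclideanSpace ℝ (Fin d)) (wp : ℕ → EuclideanSpace ℝ (Fin d))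
    (hwp0 : wp 0 = w)
    (hwpS : ∀ j, wp (j + 1) = wp j - α • gradient l (wp j)) :
    ‖gradient l w -
        (((List.range N).map (fun j =>
            (1 : EuclideanSpace ℝ (Fin d) →L[ℝ] EuclideanSpace ℝ (Fin d))
              - α • fderiv ℝ (gradient l) (wp j))).prod)
          (gradient l (wp N))‖
      ≤ ((1 + α * L) ^ (2 * N) - 1) * ‖gradient l w‖ := by
  have hL0 : 0 ≤ L := le_trans (norm_nonneg _) (hL w)
  have hc : 0 ≤ α * L := mul_nonneg hα hL0
  have hgd : Differentiable ℝ (gradient l) := grad_differentiable d l hl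
  -- Lipschitz estimate for the gradient
  have hlip : ∀ x y : EuclideanSpace ℝ (Fin d),
      ‖gradient l y - gradient l x‖ ≤ L * ‖y - x‖ := fun x y =>
    Convex.norm_image_sub_le_of_norm_fderiv_le (fun z _ => hgd z)
      (fun z _ => hL z) convex_univ (Set.mem_univ x) (Set.mem_univ y)
  -- the iterate gradient bound
  have gb : ∀ j, ‖gradient l (wp j)‖ ≤ (1 + α * L) ^ j * ‖gradient l w‖ := by
    intro j
    induction j with
    | zero => simp [hwp0]
    | succ j ih =>
      have hnorm : ‖wp (j+1) - wp j‖ = α * ‖gradient l (wp j)‖ := by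
        rw [hwpS j]
        simp [sub_sub_cancel_left, norm_smul, abs_of_nonneg hα]
      have hstep : ‖gradient l (wp (j+1)) - gradient l (wp j)‖
          ≤ L * (α * ‖gradient l (wp j)‖) := by
        have h := hlip (wp j) (wp (j+1))
        rwa [hnorm] at h
      have h1 : ‖gradient l (wp (j+1))‖
          ≤ ‖gradient l (wp (j+1)) - gradient l (wp j)‖ + ‖gradient l (wp j)‖ := by
        simpa using norm_add_le (gradient l (wp (j+1)) - gradient l (wp j))
          (gradient l (wp j))
      have hge : (0:ℝ) ≤ ‖gradient l (wp j)‖ := norm_nonneg _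
      calc ‖gradient l (wp (j+1))‖
          ≤ L * (α * ‖gradient l (wp j)‖) + ‖gradient l (wp j)‖ := by linarith
        _ = (1 + α * L) * ‖gradient l (wp j)‖ := by ring
        _ ≤ (1 + α * L) * ((1 + α * L) ^ j * ‖gradient l w‖) :=
            mul_le_mul_of_nonneg_left ih (by linarith)
        _ = (1 + α * L) ^ (j+1) * ‖gradient l w‖ := by ring
  -- distance between gradient at w and at wp j
  have db : ∀ j, ‖gradient l w - gradient l (wp j)‖
      ≤ ((1 + α * L) ^ j - 1) * ‖gradient l w‖ := by
    intro j
    induction j with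
    | zero => simp [hwp0]
    | succ j ih =>
      have hnorm : ‖wp j - wp (j+1)‖ = α * ‖gradient l (wp j)‖ := by
        rw [norm_sub_rev, hwpS j]
        simp [sub_sub_cancel_left, norm_smul, abs_of_nonneg hα]
      have hstep : ‖gradient l (wp j) - gradient l (wp (j+1))‖
          ≤ L * (α * ‖gradient l (wp j)‖) := by
        have h := hlip (wp (j+1)) (wp j)
        rwa [hnorm] at h
      have h1 : ‖gradient l w - gradient l (wp (j+1))‖
          ≤ ‖gradient l w - gradient l (wp j)‖
            + ‖gradient l (wp j) - gradient l (wp (j+1))‖ :=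
        norm_sub_le_norm_sub_add_norm_sub _ _ _
      have h2 : L * (α * ‖gradient l (wp j)‖)
          ≤ (α * L) * ((1 + α * L) ^ j * ‖gradient l w‖) := by
        have := gb j
        nlinarith [norm_nonneg (gradient l (wp j))]
      calc ‖gradient l w - gradient l (wp (j+1))‖
          ≤ ((1 + α * L) ^ j - 1) * ‖gradient l w‖
            + (α * L) * ((1 + α * L) ^ j * ‖gradient l w‖) := by linarith
        _ = ((1 + α * L) ^ (j+1) - 1) * ‖gradient l w‖ := by ring
  -- the product of matrices
  set P := (((List.range N).map (fun j =>
      (1 : EuclideanSpace ℝ (Fin d) →L[ℝ] EuclideanSpace ℝ (Fin d))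
        - α • fderiv ℝ (gradient l) (wp j))).prod) with hPdef
  have hmem : ∀ T ∈ (List.range N).map (fun j =>
      (1 : EuclideanSpace ℝ (Fin d) →L[ℝ] EuclideanSpace ℝ (Fin d))
        - α • fderiv ℝ (gradient l) (wp j)), ‖1 - T‖ ≤ α * L := by
    intro T hT
    rw [List.mem_map] at hT
    obtain ⟨j, -, rfl⟩ := hT
    have heq : (1 : EuclideanSpace ℝ (Fin d) →L[ℝ] EuclideanSpace ℝ (Fin d))
        - ((1 : EuclideanSpace ℝ (Fin d) →L[ℝ] EuclideanSpace ℝ (Fin d))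
          - α • fderiv ℝ (gradient l) (wp j))
        = α • fderiv ℝ (gradient l) (wp j) := by abel
    rw [heq, norm_smul α (fderiv ℝ (gradient l) (wp j)), Real.norm_eq_abs,
      abs_of_nonneg hα]
    exact mul_le_mul_of_nonneg_left (hL (wp j)) hα
  have hlen : ((List.range N).map (fun j =>
      (1 : EuclideanSpace ℝ (Fin d) →L[ℝ] EuclideanSpace ℝ (Fin d))
        - α • fderiv ℝ (gradient l) (wp j))).length = N := by simp
  have h1P : ‖(1 : EuclideanSpace ℝ (Fin d) →L[ℝ] EuclideanSpace ℝ (Fin d)) - P‖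
      ≤ (1 + α * L) ^ N - 1 := by
    have := aux_prod_near_one (α * L) hc _ hmem
    rwa [hlen] at this
  have hPn : ‖P‖ ≤ (1 + α * L) ^ N := by
    have h := norm_sub_le (1 : EuclideanSpace ℝ (Fin d) →L[ℝ] EuclideanSpace ℝ (Fin d))
      ((1 : EuclideanSpace ℝ (Fin d) →L[ℝ] EuclideanSpace ℝ (Fin d)) - P)
    simp only [sub_sub_cancel] at h
    have hone : ‖(1 : EuclideanSpace ℝ (Fin d) →L[ℝ] EuclideanSpace ℝ (Fin d))‖ ≤ 1 :=
      ContinuousLinearMap.norm_id_le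
    linarith
  -- decomposition
  have key : gradient l w - P (gradient l (wp N))
      = ((1 - P) (gradient l w)) + P (gradient l w - gradient l (wp N)) := by
    simp only [ContinuousLinearMap.sub_apply, ContinuousLinearMap.one_apply, map_sub]
    abel
  rw [key]
  have e1 : ‖((1 : EuclideanSpace ℝ (Fin d) →L[ℝ] EuclideanSpace ℝ (Fin d)) - P)
      (gradient l w)‖ ≤ ((1 + α * L) ^ N - 1) * ‖gradient l w‖ :=
    (ContinuousLinearMap.le_opNorm _ _).trans
      (mul_le_mul_of_nonneg_right h1P (norm_nonneg _))
  have e2 : ‖P (gradient l w - gradient l (wp N))‖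
      ≤ (1 + α * L) ^ N * (((1 + α * L) ^ N - 1) * ‖gradient l w‖) :=
    (ContinuousLinearMap.le_opNorm _ _).trans
      (mul_le_mul hPn (db N) (norm_nonneg _) (by positivity))
  have hpow2 : (1 + α * L) ^ (2 * N) = (1 + α * L) ^ N * (1 + α * L) ^ N := by
    rw [two_mul, pow_add]
  calc ‖((1 : EuclideanSpace ℝ (Fin d) →L[ℝ] EuclideanSpace ℝ (Fin d)) - P)
        (gradient l w) + P (gradient l w - gradient l (wp N))‖
      ≤ ‖((1 : EuclideanSpace ℝ (Fin d) →L[ℝ] EuclideanSpace ℝ (Fin d)) - P)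
          (gradient l w)‖ + ‖P (gradient l w - gradient l (wp N))‖ := norm_add_le _ _
    _ ≤ ((1 + α * L) ^ N - 1) * ‖gradient l w‖
        + (1 + α * L) ^ N * (((1 + α * L) ^ N - 1) * ‖gradient l w‖) := by linarith
    _ = ((1 + α * L) ^ (2 * N) - 1) * ‖gradient l w‖ := by rw [hpow2]; ring
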